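/- Let D be a sequential transducer (a finite transducer whose input automaton is deterministic, with a final output function). For all pairs (u₁,v₁), (u₂,v₂) in the relation ⟦D⟧ realised by D, |Δ(v₁,v₂)| ≤ M_D · (|Δ(u₁,u₂)| + 2), where M_D is the maximal length of an output word labelling a transition or a final output of D. -/

import Mathlib

variable {S G : Type}

def wordFG (w : List G) : FreeGroup G := (w.map FreeGroup.of).prod

def delta (v w : List G) : FreeGroup G := (wordFG v)⁻¹ * wordFG w

def dlen [DecidableEq G] (v w : List G) : ℕ := (delta v w).norm

def wpow (v : List G) (n : ℕ) : List G := (List.replicate n v).flatten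

structure NFT (S G Q : Type) where
  E : Set (Q × S × List G × Q)
  I : Set Q
  F : Set Q
  out : Q → List G

namespace NFT

variable {Q Q₁ Q₂ : Type}

inductive Run (T : NFT S G Q) : Q → List S → List G → Q → Prop
  | nil (q : Q) : Run T q [] [] q
  | cons {q q' q'' : Q} {a : S} {w : List G} {u : List S} {v : List G} :
      (q, a, w, q') ∈ T.E → Run T q' u v q'' → Run T q (a :: u) (w ++ v) q''

def Rel (T : NFT S G Q) (u : List S) (v : List G) : Prop :=
  ∃ i t w, i ∈ T.I ∧ t ∈ T.F ∧ T.Run i u w t ∧ v = w ++ T.out t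

def Trim (T : NFT S G Q) : Prop :=
  ∀ q : Q, ∃ i t u₁ w₁ u₂ w₂, i ∈ T.I ∧ t ∈ T.F ∧ T.Run i u₁ w₁ q ∧ T.Run q u₂ w₂ t

def WTP (T : NFT S G Q) : Prop :=
  ∀ q₁ q₂ (u v : List S) (u₁ u₂ v₁ v₂ : List G), T.Run q₁ u u₁ q₁ → T.Run q₁ v v₁ q₁ →
    T.Run q₁ u u₂ q₂ → T.Run q₂ v v₂ q₂ →
    delta u₁ u₂ = delta (u₁ ++ v₁) (u₂ ++ v₂)

def Seq (T : NFT S G Q) : Prop :=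
  (∃ q₀, T.I = {q₀}) ∧
  ∀ q a w₁ q₁ w₂ q₂, (q, a, w₁, q₁) ∈ T.E → (q, a, w₂, q₂) ∈ T.E → w₁ = w₂ ∧ q₁ = q₂

end NFT
lemma wordFG_mk (v : List G) : wordFG v = FreeGroup.mk (v.map (fun g => (g, true))) := by
  induction v with
  | nil => rfl
  | cons a v ih =>
    simp only [wordFG, List.map_cons, List.prod_cons] at *
    rw [ih, FreeGroup.of, FreeGroup.mul_mk]
    rfl

lemma wordFG_append (v w : List G) : wordFG (v ++ w) = wordFG v * wordFG w := by
  simp [wordFG_mk, FreeGroup.mul_mk]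

lemma delta_append (p a b : List G) : delta (p ++ a) (p ++ b) = delta a b := by
  simp [delta, wordFG_append, mul_assoc]

lemma norm_wordFG_le [DecidableEq G] (v : List G) : (wordFG v).norm ≤ v.length := by
  rw [wordFG_mk]
  refine le_trans FreeGroup.norm_mk_le ?_
  simp

lemma dlen_le [DecidableEq G] (a b : List G) : dlen a b ≤ a.length + b.length := by
  calc dlen a b ≤ (wordFG a)⁻¹.norm + (wordFG b).norm := FreeGroup.norm_mul_le (wordFG a)⁻¹ (wordFG b)
    _ ≤ a.length + b.length := by
        rw [FreeGroup.norm_inv_eq]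
        exact Nat.add_le_add (norm_wordFG_le a) (norm_wordFG_le b)

lemma chain'_true {A : Type} (l : List A) : List.Chain' (fun _ _ => True) l := by
  induction l with
  | nil => exact List.isChain_nil
  | cons a l ih => cases l with
    | nil => exact List.isChain_singleton a
    | cons b l => exact List.isChain_cons_cons.mpr ⟨trivial, ih⟩

lemma reduce_eq_self [DecidableEq G] {L : List (G × Bool)}
    (h : List.Chain' (fun a b => ¬(a.1 = b.1 ∧ a.2 = !b.2)) L) : FreeGroup.reduce L = L := by
  induction L with
  | nil => rfl
  | cons x L ih =>
    rw [FreeGroup.reduce.cons, ih h.tail]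
    cases L with
    | nil => rfl
    | cons y L' =>
      have := (List.isChain_cons_cons.mp h).1
      simp [this]

lemma dlen_eq [DecidableEq G] (a b : List G)
    (hd : ∀ x y, a.head? = some x → b.head? = some y → x ≠ y) :
    dlen a b = a.length + b.length := by
  have h1 : delta a b = FreeGroup.mk
      (a.reverse.map (fun g => (g, false)) ++ b.map (fun g => (g, true))) := by
    rw [delta, wordFG_mk, wordFG_mk, FreeGroup.inv_mk, FreeGroup.mul_mk, FreeGroup.invRev]
    simp [List.map_reverse, Function.comp_def]
  have hred : FreeGroup.reduce
      (a.reverse.map (fun g => (g, false)) ++ b.map (fun g => (g, true))) =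
      a.reverse.map (fun g => (g, false)) ++ b.map (fun g => (g, true)) := by
    apply reduce_eq_self
    rw [List.Chain', List.isChain_append]
    refine ⟨?_, ?_, ?_⟩
    · rw [List.isChain_map]
      exact (chain'_true _).imp (by simp)
    · rw [List.isChain_map]
      exact (chain'_true _).imp (by simp)
    · intro x hx y hy
      simp only [List.getLast?_eq_head?_reverse, List.map_reverse, List.reverse_reverse] at hx
      cases a with
      | nil => simp at hx
      | cons a0 a' =>
        cases b with
        | nil => simp at hy
        | cons b0 b' =>
          simp only [List.map_cons, List.head?_cons, Option.some.injEq, Option.mem_def] at hx hy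
          subst hx; subst hy
          have := hd a0 b0 rfl rfl
          simp [this]
  rw [dlen, h1, FreeGroup.norm, FreeGroup.toWord_mk, hred]
  simp

lemma lcp_exists [DecidableEq S] : ∀ (u₁ u₂ : List S), ∃ p s₁ s₂, u₁ = p ++ s₁ ∧ u₂ = p ++ s₂ ∧
    (∀ x y, s₁.head? = some x → s₂.head? = some y → x ≠ y) := by
  intro u₁
  induction u₁ with
  | nil => intro u₂; exact ⟨[], [], u₂, rfl, rfl, by simp⟩
  | cons a u₁ ih =>
    intro u₂
    cases u₂ with
    | nil => exact ⟨[], a :: u₁, [], rfl, rfl, by simp⟩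
    | cons b u₂ =>
      by_cases hab : a = b
      · subst hab
        obtain ⟨p, s₁, s₂, h1, h2, h3⟩ := ih u₂
        exact ⟨a :: p, s₁, s₂, by simp [h1], by simp [h2], h3⟩
      · exact ⟨[], a :: u₁, b :: u₂, rfl, rfl, by simp [hab]⟩

variable {Q : Type}

lemma run_det {D : NFT S G Q} (hseq : D.Seq) :
    ∀ {u : List S} {q : Q} {w₁ : List G} {q₁ w₂ q₂}, D.Run q u w₁ q₁ → D.Run q u w₂ q₂ →
      w₁ = w₂ ∧ q₁ = q₂ := by
  intro u
  induction u with
  | nil =>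
    intro q w₁ q₁ w₂ q₂ h1 h2
    cases h1; cases h2; exact ⟨rfl, rfl⟩
  | cons a u ih =>
    intro q w₁ q₁ w₂ q₂ h1 h2
    cases h1 with
    | cons hE1 hr1 =>
      cases h2 with
      | cons hE2 hr2 =>
        obtain ⟨hw, hq⟩ := hseq.2 _ _ _ _ _ _ hE1 hE2
        subst hw; subst hq
        obtain ⟨hw', hq'⟩ := ih hr1 hr2
        exact ⟨by rw [hw'], hq'⟩

lemma run_split {D : NFT S G Q} :
    ∀ (p : List S) {q : Q} {s : List S} {w : List G} {t : Q}, D.Run q (p ++ s) w t →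
      ∃ q' w₁ w₂, w = w₁ ++ w₂ ∧ D.Run q p w₁ q' ∧ D.Run q' s w₂ t := by
  intro p
  induction p with
  | nil => intro q s w t h; exact ⟨q, [], w, rfl, NFT.Run.nil q, h⟩
  | cons a p ih =>
    intro q s w t h
    rw [List.cons_append] at h
    cases h with
    | cons hE hr =>
      obtain ⟨q', w₁, w₂, hw, h1, h2⟩ := ih hr
      exact ⟨q', _ ++ w₁, w₂, by rw [hw, List.append_assoc], NFT.Run.cons hE h1, h2⟩

lemma run_len {D : NFT S G Q} {M : ℕ}
    (hME : ∀ q a (w : List G) q', (q, a, w, q') ∈ D.E → w.length ≤ M)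
    {q : Q} {u : List S} {w : List G} {t : Q} (h : D.Run q u w t) :
    w.length ≤ M * u.length := by
  induction h with
  | nil => simp
  | @cons q q' q'' a w u v hE hr ih =>
    have h1 := hME _ _ _ _ hE
    simp only [List.length_append, List.length_cons]
    calc w.length + v.length ≤ M + M * u.length := Nat.add_le_add h1 ih
      _ = M * (u.length + 1) := by ring


/-- Bounded variation of sequential transducers: for pairs `(u₁,v₁), (u₂,v₂)` realised by a
sequential transducer `D`, `|Δ(v₁,v₂)| ≤ M_D · (|Δ(u₁,u₂)| + 2)`. -/
theorem bounded_variation [DecidableEq S] [DecidableEq G] {Q : Type}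
    (D : NFT S G Q) (hseq : D.Seq) (M : ℕ)
    (hME : ∀ q a (w : List G) q', (q, a, w, q') ∈ D.E → w.length ≤ M)
    (hMf : ∀ t ∈ D.F, (D.out t).length ≤ M)
    (u₁ u₂ : List S) (v₁ v₂ : List G)
    (h₁ : D.Rel u₁ v₁) (h₂ : D.Rel u₂ v₂) :
    dlen v₁ v₂ ≤ M * (dlen u₁ u₂ + 2) := by
  obtain ⟨q0, hI⟩ := hseq.1
  obtain ⟨i₁, t₁, w₁, hi₁, ht₁, hr₁, hv₁⟩ := h₁
  obtain ⟨i₂, t₂, w₂, hi₂, ht₂, hr₂, hv₂⟩ := h₂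
  rw [hI] at hi₁ hi₂
  simp only [Set.mem_singleton_iff] at hi₁ hi₂
  subst hi₁; subst hi₂
  obtain ⟨p, s₁, s₂, hu₁, hu₂, hhd⟩ := lcp_exists u₁ u₂
  subst hu₁; subst hu₂
  obtain ⟨r₁, a₁, b₁, hw₁, hp₁, hs₁⟩ := run_split p hr₁
  obtain ⟨r₂, a₂, b₂, hw₂, hp₂, hs₂⟩ := run_split p hr₂
  obtain ⟨ha, hr⟩ := run_det hseq hp₁ hp₂
  subst ha; subst hr
  have hv₁' : v₁ = a₁ ++ (b₁ ++ D.out t₁) := by rw [hv₁, hw₁, List.append_assoc]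
  have hv₂' : v₂ = a₁ ++ (b₂ ++ D.out t₂) := by rw [hv₂, hw₂, List.append_assoc]
  have hd : dlen v₁ v₂ ≤ (b₁ ++ D.out t₁).length + (b₂ ++ D.out t₂).length := by
    rw [hv₁', hv₂']
    show (delta _ _).norm ≤ _
    rw [delta_append]
    exact dlen_le _ _
  have hu : dlen (p ++ s₁) (p ++ s₂) = s₁.length + s₂.length := by
    show (delta _ _).norm = _
    rw [delta_append]
    exact dlen_eq s₁ s₂ hhd
  rw [hu]
  have l1 : b₁.length ≤ M * s₁.length := run_len hME hs₁
  have l2 : b₂.length ≤ M * s₂.length := run_len hME hs₂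
  have f1 : (D.out t₁).length ≤ M := hMf t₁ ht₁
  have f2 : (D.out t₂).length ≤ M := hMf t₂ ht₂
  have key : M * (s₁.length + s₂.length + 2) = M * s₁.length + M * s₂.length + M + M := by ring
  simp only [List.length_append] at hd
  omega
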